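/- For any p > 0 there exists a constant c_p > 0 such that for all 0 < τ < 1 and all complex numbers v, w: |(e^{-iτλ|v|^p} v - v)/τ - (e^{-iτλ|w|^p} w - w)/τ| ≤ c_p |v - w| (|v|^p + |w|^p), where λ ∈ {-1, 1}. -/

import Mathlib

open Complex

/-- The nonlinear flow `N(τ)v = exp(-iτλ|v|^p) v`. -/
noncomputable def Nflow (lam p τ : ℝ) (v : ℂ) : ℂ :=
  Complex.exp (-Complex.I * τ * lam * ((‖v‖ ^ p : ℝ) : ℂ)) * v

lemma aux_abs_exp_mul_I_sub_one_le (x : ℝ) :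
    ‖Complex.exp (x * I) - 1‖ ≤ |x| := by
  have h2 : 1 - x ^ 2 / 2 ≤ Real.cos x := Real.one_sub_sq_div_two_le_cos
  have habs : ‖Complex.exp (x * I) - 1‖ ^ 2 = 2 - 2 * Real.cos x := by
    rw [Complex.sq_norm, Complex.normSq_apply]
    simp only [Complex.sub_re, Complex.sub_im, Complex.exp_ofReal_mul_I_re,
      Complex.exp_ofReal_mul_I_im, Complex.one_re, Complex.one_im]
    nlinarith [Real.sin_sq_add_cos_sq x]
  nlinarith [norm_nonneg (Complex.exp (x * I) - 1), abs_nonneg x, _root_.sq_abs x, habs]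

lemma aux_abs_exp_sub_exp_le (x y : ℝ) :
    ‖Complex.exp (x * I) - Complex.exp (y * I)‖ ≤ |x - y| := by
  have h : Complex.exp (x * I) - Complex.exp (y * I)
      = Complex.exp (y * I) * (Complex.exp ((x - y : ℝ) * I) - 1) := by
    rw [mul_sub, ← Complex.exp_add, mul_one]
    congr 2
    push_cast
    ring
  rw [h, norm_mul, Complex.norm_exp_ofReal_mul_I, one_mul]
  exact aux_abs_exp_mul_I_sub_one_le _

lemma aux_core (p : ℝ) (hp : 0 < p) {t : ℝ} (ht0 : 0 ≤ t) (ht1 : t ≤ 1) :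
    1 - t ^ p ≤ max p 1 * (1 - t) := by
  rcases le_or_gt 1 p with hp1 | hp1
  · have hb := one_add_mul_self_le_rpow_one_add (s := t - 1) (by linarith) hp1
    rw [show 1 + (t - 1) = t by ring] at hb
    have : p * (1 - t) ≤ max p 1 * (1 - t) :=
      mul_le_mul_of_nonneg_right (le_max_left p 1) (by linarith)
    nlinarith
  · rcases ht0.eq_or_lt with rfl | ht0'
    · rw [Real.zero_rpow hp.ne']
      have : (1:ℝ) * (1 - 0) ≤ max p 1 * (1 - 0) :=
        mul_le_mul_of_nonneg_right (le_max_right p 1) (by norm_num)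
      linarith
    · have htp : t ^ (1:ℝ) ≤ t ^ p :=
        Real.rpow_le_rpow_of_exponent_ge ht0' ht1 hp1.le
      rw [Real.rpow_one] at htp
      have : (1:ℝ) * (1 - t) ≤ max p 1 * (1 - t) :=
        mul_le_mul_of_nonneg_right (le_max_right p 1) (by linarith)
      linarith

lemma aux_rpow (p : ℝ) (hp : 0 < p) {a b : ℝ} (hb : 0 ≤ b) (hba : b ≤ a) :
    (a ^ p - b ^ p) * b ≤ max p 1 * a ^ p * (a - b) := by
  have ha : 0 ≤ a := hb.trans hba
  rcases ha.eq_or_lt with rfl | ha'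
  · obtain rfl : b = 0 := le_antisymm hba hb
    simp
  · set t := b / a with hts
    have ht0 : 0 ≤ t := div_nonneg hb ha
    have ht1 : t ≤ 1 := (div_le_one ha').mpr hba
    have hbt : b = t * a := by rw [hts, div_mul_cancel₀ b ha'.ne']
    have hbp : b ^ p = t ^ p * a ^ p := by
      rw [hbt, Real.mul_rpow ht0 ha]
    have hple : b ^ p ≤ a ^ p := Real.rpow_le_rpow hb hba hp.le
    have hcore := aux_core p hp ht0 ht1
    have h4 : (a ^ p - b ^ p) * b ≤ (a ^ p - b ^ p) * a :=
      mul_le_mul_of_nonneg_left hba (by linarith)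
    have hap : 0 ≤ a ^ p := Real.rpow_nonneg ha p
    have h6 : a ^ p * a * (1 - t ^ p) ≤ a ^ p * a * (max p 1 * (1 - t)) :=
      mul_le_mul_of_nonneg_left hcore (by positivity)
    calc (a ^ p - b ^ p) * b ≤ (a ^ p - b ^ p) * a := h4
      _ = a ^ p * a * (1 - t ^ p) := by rw [hbp]; ring
      _ ≤ a ^ p * a * (max p 1 * (1 - t)) := h6
      _ = max p 1 * a ^ p * (a - b) := by rw [hbt]; ring

lemma aux_main (p lam τ : ℝ) (hp : 0 < p) (hl : |lam| ≤ 1) (hτ : 0 < τ)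
    (v w : ℂ) (hab : ‖w‖ ≤ ‖v‖) :
    ‖(Nflow lam p τ v - v) / τ - (Nflow lam p τ w - w) / τ‖
      ≤ (1 + max p 1) * ‖v - w‖
        * (‖v‖ ^ p + ‖w‖ ^ p) := by
  set a := ‖v‖ with ha
  set b := ‖w‖ with hb
  have ha0 : 0 ≤ a := norm_nonneg v
  have hb0 : 0 ≤ b := norm_nonneg w
  have hap : 0 ≤ a ^ p := Real.rpow_nonneg ha0 p
  have hbp : 0 ≤ b ^ p := Real.rpow_nonneg hb0 p
  have hple : b ^ p ≤ a ^ p := Real.rpow_le_rpow hb0 hab hp.le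
  set x : ℝ := -(τ * lam * a ^ p) with hx
  set y : ℝ := -(τ * lam * b ^ p) with hy
  have hNv : Nflow lam p τ v = Complex.exp ((x : ℂ) * I) * v := by
    unfold Nflow
    congr 2
    rw [hx]
    push_cast
    ring
  have hNw : Nflow lam p τ w = Complex.exp ((y : ℂ) * I) * w := by
    unfold Nflow
    congr 2
    rw [hy]
    push_cast
    ring
  have hτ' : (τ : ℂ) ≠ 0 := by exact_mod_cast hτ.ne'
  have h1 : (Nflow lam p τ v - v) / τ - (Nflow lam p τ w - w) / τ
      = ((Complex.exp ((x : ℂ) * I) - 1) * (v - w)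
        + (Complex.exp ((x : ℂ) * I) - Complex.exp ((y : ℂ) * I)) * w) / τ := by
    rw [hNv, hNw]
    field_simp
    ring
  have hxb : |x| ≤ τ * a ^ p := by
    rw [hx, abs_neg, abs_mul, abs_mul, abs_of_pos hτ, _root_.abs_of_nonneg hap]
    calc τ * |lam| * a ^ p ≤ τ * 1 * a ^ p := by
          apply mul_le_mul_of_nonneg_right _ hap
          exact mul_le_mul_of_nonneg_left hl hτ.le
      _ = τ * a ^ p := by ring
  have hxyb : |x - y| ≤ τ * (a ^ p - b ^ p) := by
    have : x - y = -(τ * lam * (a ^ p - b ^ p)) := by rw [hx, hy]; ring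
    rw [this, abs_neg, abs_mul, abs_mul, abs_of_pos hτ,
      _root_.abs_of_nonneg (by linarith : (0:ℝ) ≤ a ^ p - b ^ p)]
    calc τ * |lam| * (a ^ p - b ^ p) ≤ τ * 1 * (a ^ p - b ^ p) := by
          apply mul_le_mul_of_nonneg_right _ (by linarith)
          exact mul_le_mul_of_nonneg_left hl hτ.le
      _ = τ * (a ^ p - b ^ p) := by ring
  have htri : ‖(Complex.exp ((x : ℂ) * I) - 1) * (v - w)
        + (Complex.exp ((x : ℂ) * I) - Complex.exp ((y : ℂ) * I)) * w‖
      ≤ τ * a ^ p * ‖v - w‖ + τ * (a ^ p - b ^ p) * b := by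
    refine (norm_add_le _ _).trans ?_
    rw [norm_mul, norm_mul]
    have e1 : ‖Complex.exp ((x : ℂ) * I) - 1‖ ≤ τ * a ^ p :=
      (aux_abs_exp_mul_I_sub_one_le x).trans hxb
    have e2 : ‖Complex.exp ((x : ℂ) * I) - Complex.exp ((y : ℂ) * I)‖
        ≤ τ * (a ^ p - b ^ p) := (aux_abs_exp_sub_exp_le x y).trans hxyb
    have := norm_nonneg (v - w)
    gcongr
  have hsub : a - b ≤ ‖v - w‖ := by
    simpa [ha, hb] using norm_sub_norm_le v w
  have hrp := aux_rpow p hp hb0 hab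
  have hM1 : (1:ℝ) ≤ max p 1 := le_max_right p 1
  have hMa : 0 ≤ max p 1 * a ^ p := by positivity
  have habs0 : 0 ≤ ‖v - w‖ := norm_nonneg _
  rw [h1, norm_div, Complex.norm_real, Real.norm_eq_abs, abs_of_pos hτ]
  rw [div_le_iff₀ hτ]
  calc ‖(Complex.exp ((x : ℂ) * I) - 1) * (v - w)
        + (Complex.exp ((x : ℂ) * I) - Complex.exp ((y : ℂ) * I)) * w‖
      ≤ τ * a ^ p * ‖v - w‖ + τ * (a ^ p - b ^ p) * b := htri
    _ = τ * (a ^ p * ‖v - w‖ + (a ^ p - b ^ p) * b) := by ring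
    _ ≤ τ * (a ^ p * ‖v - w‖
          + max p 1 * a ^ p * ‖v - w‖) := by
        have h1 : (a ^ p - b ^ p) * b ≤ max p 1 * a ^ p * ‖v - w‖ :=
          hrp.trans (mul_le_mul_of_nonneg_left hsub hMa)
        exact mul_le_mul_of_nonneg_left (by linarith) hτ.le
    _ ≤ (1 + max p 1) * ‖v - w‖ * (a ^ p + b ^ p) * τ := by
        have h2 : 0 ≤ τ * ((1 + max p 1) * (‖v - w‖ * b ^ p)) := by
          positivity
        nlinarith [h2]

/-- Lipschitz-type bound for the nonlinear flow (Mean Value Theorem estimate). -/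
theorem stmt_0 (p : ℝ) (hp : 0 < p) :
    ∃ c : ℝ, 0 < c ∧ ∀ lam : ℝ, (lam = -1 ∨ lam = 1) →
      ∀ τ : ℝ, 0 < τ → τ < 1 → ∀ v w : ℂ,
        ‖(Nflow lam p τ v - v) / τ - (Nflow lam p τ w - w) / τ‖
          ≤ c * ‖v - w‖ * (‖v‖ ^ p + ‖w‖ ^ p) := by
  have hM1 : (1:ℝ) ≤ max p 1 := le_max_right p 1
  refine ⟨1 + max p 1, by linarith, ?_⟩
  intro lam hlam τ hτ0 hτ1 v w
  have hl : |lam| ≤ 1 := by rcases hlam with rfl | rfl <;> norm_num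
  rcases le_total (‖w‖) (‖v‖) with hab | hab
  · exact aux_main p lam τ hp hl hτ0 v w hab
  · have h := aux_main p lam τ hp hl hτ0 w v hab
    calc ‖(Nflow lam p τ v - v) / τ - (Nflow lam p τ w - w) / τ‖
        = ‖(Nflow lam p τ w - w) / τ - (Nflow lam p τ v - v) / τ‖ :=
          norm_sub_rev _ _
      _ ≤ (1 + max p 1) * ‖w - v‖
          * (‖w‖ ^ p + ‖v‖ ^ p) := h
      _ = (1 + max p 1) * ‖v - w‖
          * (‖v‖ ^ p + ‖w‖ ^ p) := by
          rw [norm_sub_rev w v]; ring
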